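/- Let X be a compact metric space and f₁,…,f_k continuous self-maps of X. Let Q ⊆ X and suppose that every point y ∈ X admits a finite word w with f_w(y) ∈ Q. Then for every x ∈ X the hitting set A(x) = { n ∈ ℕ : ∃ word w of length n with f_w(x) ∈ Q } is syndetic in ℕ. -/

import Mathlib

/-- A set of naturals is syndetic if it has bounded gaps. -/
def Syndetic (A : Set ℕ) : Prop :=
  ∃ N : ℕ, ∀ m : ℕ, ∃ a ∈ A, m ≤ a ∧ a ≤ m + N

/-- Apply the maps of an IFS along a finite word: `f_{w_n} ∘ ⋯ ∘ f_{w_1}`. -/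
def applyWord {X : Type*} {k : ℕ} (f : Fin k → X → X) (w : List (Fin k)) (x : X) : X :=
  w.foldl (fun y i => f i y) x

lemma applyWord_append {X : Type*} {k : ℕ} (f : Fin k → X → X) (v w : List (Fin k)) (x : X) :
    applyWord f (v ++ w) x = applyWord f w (applyWord f v x) :=
  List.foldl_append

lemma continuous_applyWord {X : Type*} [TopologicalSpace X] {k : ℕ} (f : Fin k → X → X)
    (hf : ∀ i, Continuous (f i)) (w : List (Fin k)) : Continuous (applyWord f w) := by
  induction w with
  | nil => exact continuous_id
  | cons i w ih => exact ih.comp (hf i)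

theorem stmt14 {X : Type*} [MetricSpace X] [CompactSpace X] {k : ℕ}
    (f : Fin k → X → X) (hf : ∀ i, Continuous (f i))
    (Q : Set X) (hQ : IsOpen Q)
    (hcover : ∀ y : X, ∃ w : List (Fin k), w ≠ [] ∧ applyWord f w y ∈ Q) :
    ∀ x : X,
      Syndetic {n : ℕ | ∃ w : List (Fin k), w.length = n ∧ applyWord f w x ∈ Q} := by
  intro x
  choose w hw hwQ using hcover
  obtain ⟨t, ht⟩ := isCompact_univ.elim_finite_subcover
    (fun y => (applyWord f (w y)) ⁻¹' Q)
    (fun y => hQ.preimage (continuous_applyWord f hf (w y)))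
    (fun z _ => Set.mem_iUnion.2 ⟨z, hwQ z⟩)
  obtain ⟨i0, -⟩ := List.exists_mem_of_ne_nil _ (hw x)
  refine ⟨t.sup fun y => (w y).length, fun m => ?_⟩
  have hz := ht (Set.mem_univ (applyWord f (List.replicate m i0) x))
  obtain ⟨y, hyt, hy⟩ := Set.mem_iUnion₂.1 hz
  refine ⟨m + (w y).length, ⟨List.replicate m i0 ++ w y, by simp, ?_⟩,
    le_self_add, Nat.add_le_add_left (Finset.le_sup (f := fun y => (w y).length) hyt) m⟩
  rw [applyWord_append]
  exact hy
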